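/- Let E be an m×M matrix over a finite field F_q and let C_E be the linear code generated by the rows of E, with minimum distance d(C_E). For any nonzero vector v in F_q^M with Hamming weight less than d(C_E) and any target value s̃ in F_q, the affine system {E x^t = 0, v x^t = s̃} has a solution x in F_q^M. -/

import Mathlib

/-- If `v` is a nonzero vector whose Hamming weight is smaller than the
weight of every nonzero codeword of the row-space code of `E` (i.e. smaller than the
minimum distance of `C_E`), then for every target `s` the system `E x = 0`, `v ⬝ x = s`
has a solution. -/
theorem stmt0 {F : Type*} [Field F] [Fintype F] [DecidableEq F]
    {m M : ℕ} (E : Matrix (Fin m) (Fin M) F)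
    (v : Fin M → F) (hv0 : v ≠ 0)
    (hv : ∀ α : Fin m → F, Matrix.vecMul α E ≠ 0 →
      hammingNorm v < hammingNorm (Matrix.vecMul α E))
    (s : F) :
    ∃ x : Fin M → F, Matrix.mulVec E x = 0 ∧ dotProduct v x = s := by
  -- First find x₀ in the kernel with v ⬝ x₀ ≠ 0.
  by_cases h : ∃ x₀ : Fin M → F, Matrix.mulVec E x₀ = 0 ∧ dotProduct v x₀ ≠ 0
  · obtain ⟨x₀, hx₀, hvx₀⟩ := h
    refine ⟨(s / dotProduct v x₀) • x₀, ?_, ?_⟩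
    · rw [Matrix.mulVec_smul, hx₀, smul_zero]
    · rw [dotProduct_smul, smul_eq_mul]
      field_simp
  · push_neg at h
    -- v (as a functional) vanishes on the kernel of E, so it lies in the span of the rows.
    exfalso
    set L : Fin m → (Fin M → F) →ₗ[F] F := fun i =>
      LinearMap.proj i ∘ₗ Matrix.mulVecLin E with hL
    set K : (Fin M → F) →ₗ[F] F :=
      { toFun := fun x => dotProduct v x,
        map_add' := fun x y => dotProduct_add v x y,
        map_smul' := fun c x => dotProduct_smul c v x } with hK
    have hker : ⨅ i, LinearMap.ker (L i) ≤ LinearMap.ker K := by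
      intro x hx
      simp only [Submodule.mem_iInf, LinearMap.mem_ker, hL, LinearMap.comp_apply,
        LinearMap.proj_apply, Matrix.mulVecLin_apply] at hx
      have hx0 : Matrix.mulVec E x = 0 := funext hx
      simpa [hK] using h x hx0
    have hspan := mem_span_of_iInf_ker_le_ker hker
    obtain ⟨c, hc⟩ := (Submodule.mem_span_range_iff_exists_fun F).1 hspan
    have hveq : Matrix.vecMul c E = v := by
      funext j
      have := congrArg (fun (f : (Fin M → F) →ₗ[F] F) => f (Pi.single j 1)) hc
      simp only [LinearMap.coe_sum, Finset.sum_apply, LinearMap.smul_apply, hL, hK,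
        LinearMap.comp_apply, LinearMap.proj_apply, Matrix.mulVecLin_apply,
        LinearMap.coe_mk, AddHom.coe_mk, smul_eq_mul] at this
      simp only [Matrix.mulVec_single, mul_one, dotProduct_single] at this
      rw [← this]
      simp [Matrix.vecMul, dotProduct]
    have := hv c (by rw [hveq]; exact hv0)
    rw [hveq] at this
    exact lt_irrefl _ this
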